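/- Let M ∈ ℂ^{2n×2n} be such that the ⊤-palindromic pencil φ(z) = M + zMᵀ is regular. Let U, V ∈ ℂ^{2n×ℓ} with U of rank ℓ, and let A', B' ∈ ℂ^{ℓ×ℓ} be such that M·U = V·A' and Mᵀ·U = V·B', where the pencil A' + zB' is regular with reciprocal-free spectrum. Then the column span of U is isotropic for φ(z), i.e., Uᵀ M U = 0 (equivalently, Uᵀ(M + zMᵀ)U = 0 for all z ∈ ℂ). -/

import Mathlib

open Polynomial


open scoped Matrix

/-- A pencil `A + z B` of square complex matrices is regular
if `det (A + z B)` is not identically zero. -/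
def PencilRegular {k : ℕ} (A B : Matrix (Fin k) (Fin k) ℂ) : Prop :=
  ∃ z : ℂ, (A + z • B).det ≠ 0

/-- The spectrum of the pencil `A + z B` is reciprocal-free: no pair of eigenvalues
`(z, w)` with `z w = 1`, and `0` and `∞` are not both eigenvalues. -/
def PencilReciprocalFree {k : ℕ} (A B : Matrix (Fin k) (Fin k) ℂ) : Prop :=
  (¬ ∃ z w : ℂ, z * w = 1 ∧ (A + z • B).det = 0 ∧ (A + w • B).det = 0) ∧
    ¬ (A.det = 0 ∧ B.det = 0)

variable {k : ℕ}

noncomputable def pencilPoly (A B : Matrix (Fin k) (Fin k) ℂ) : Polynomial ℂ :=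
  (A.map C + (X : ℂ[X]) • B.map C).det

lemma eval_pencilPoly (A B : Matrix (Fin k) (Fin k) ℂ) (z : ℂ) :
    (pencilPoly A B).eval z = (A + z • B).det := by
  have h := (evalRingHom z).map_det (A.map C + (X : ℂ[X]) • B.map C)
  rw [pencilPoly, ← coe_evalRingHom] at *
  rw [h]
  congr 1
  ext i j
  simp only [Matrix.map_apply, Matrix.add_apply, Matrix.smul_apply, map_add, smul_eq_mul,
    eval_add, eval_mul, eval_C, eval_X, coe_evalRingHom, RingHom.mapMatrix_apply]

lemma eval_charpoly_eq (B : Matrix (Fin k) (Fin k) ℂ) (r : ℂ) :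
    B.charpoly.eval r = (r • (1 : Matrix (Fin k) (Fin k) ℂ) - B).det := by
  have h := (evalRingHom r).map_det (Matrix.charmatrix B)
  rw [Matrix.charpoly, ← coe_evalRingHom, h]
  congr 1
  ext i j
  by_cases hij : i = j <;>
    simp [hij, Matrix.charmatrix_apply, Matrix.sub_apply, Matrix.smul_apply,
      Matrix.one_apply, Matrix.diagonal_apply]

lemma aeval_mul_comm (A B Z : Matrix (Fin k) (Fin k) ℂ) (h : A * Z = Z * B) (p : ℂ[X]) :
    (aeval A p) * Z = Z * (aeval B p) := by
  induction p using Polynomial.induction_on with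
  | C a => rw [aeval_C, aeval_C, Algebra.commutes]
  | add p q hp hq => simp [add_mul, mul_add, hp, hq]
  | monomial n a ih =>
      have e : (C a : ℂ[X]) * X ^ (n + 1) = (C a * X ^ n) * X := by ring
      rw [e]
      simp only [map_mul, map_pow, aeval_X, aeval_C] at ih ⊢
      conv_lhs => rw [mul_assoc, h, ← mul_assoc]
      rw [ih, mul_assoc]

lemma det_aeval_prod (A : Matrix (Fin k) (Fin k) ℂ) (s : Multiset ℂ) :
    ((aeval A) (s.map fun r => X - C r).prod).det
      = (s.map fun r => (A - r • 1).det).prod := by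
  induction s using Multiset.induction_on with
  | empty => simp
  | cons r t ih =>
      simp only [Multiset.map_cons, Multiset.prod_cons, map_mul, Matrix.det_mul, ih]
      congr 1
      rw [map_sub, aeval_X, aeval_C, Algebra.algebraMap_eq_smul_one]

lemma sylvester (A B Z : Matrix (Fin k) (Fin k) ℂ) (h : A * Z = Z * B)
    (hdisj : ∀ μ : ℂ, (μ • (1 : Matrix (Fin k) (Fin k) ℂ) - B).det = 0 →
      (μ • (1 : Matrix (Fin k) (Fin k) ℂ) - A).det ≠ 0) :
    Z = 0 := by
  set χ := B.charpoly with hχ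
  have hCH : aeval B χ = 0 := Matrix.aeval_self_charpoly B
  have hAZ : (aeval A χ) * Z = 0 := by rw [aeval_mul_comm A B Z h χ, hCH, mul_zero]
  have hsplit : χ = (χ.roots.map fun r => X - C r).prod :=
    (IsAlgClosed.splits χ).eq_prod_roots_of_monic (Matrix.charpoly_monic B)
  have hdet : (aeval A χ).det ≠ 0 := by
    conv_lhs => rw [hsplit]
    rw [det_aeval_prod]
    intro h0
    obtain ⟨x, hx, hx0⟩ := Multiset.mem_map.mp (Multiset.prod_eq_zero_iff.mp h0)
    have hroot : χ.eval x = 0 := isRoot_of_mem_roots hx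
    rw [eval_charpoly_eq] at hroot
    have hne := hdisj x hroot
    apply hne
    rw [show A - x • 1 = -(x • (1 : Matrix (Fin k) (Fin k) ℂ) - A) from (neg_sub _ _).symm,
      Matrix.det_neg] at hx0
    rcases mul_eq_zero.mp hx0 with h1 | h2
    · exact absurd h1 (pow_ne_zero _ (by norm_num))
    · exact h2
  have hunit : IsUnit (aeval A χ).det := isUnit_iff_ne_zero.mpr hdet
  calc Z = ((aeval A χ)⁻¹ * (aeval A χ)) * Z := by rw [Matrix.nonsing_inv_mul _ hunit, one_mul]
    _ = (aeval A χ)⁻¹ * ((aeval A χ) * Z) := by rw [mul_assoc]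
    _ = 0 := by rw [hAZ, mul_zero]

theorem deflating_subspace_isotropic
    (n ℓ : ℕ) (M : Matrix (Fin (2 * n)) (Fin (2 * n)) ℂ)
    (hφ : PencilRegular M Mᵀ)
    (U V : Matrix (Fin (2 * n)) (Fin ℓ) ℂ) (hU : U.rank = ℓ)
    (A' B' : Matrix (Fin ℓ) (Fin ℓ) ℂ)
    (hMU : M * U = V * A') (hMTU : Mᵀ * U = V * B')
    (hreg : PencilRegular A' B') (hrf : PencilReciprocalFree A' B') :
    Uᵀ * M * U = 0 := by
  classical
  set Z : Matrix (Fin ℓ) (Fin ℓ) ℂ := Vᵀ * U with hZdef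
  have hZT : Zᵀ = Uᵀ * V := by
    rw [hZdef, Matrix.transpose_mul, Matrix.transpose_transpose]
  have hH : Uᵀ * M * U = Zᵀ * A' := by
    rw [Matrix.mul_assoc, hMU, hZT, Matrix.mul_assoc]
  have hHT : Uᵀ * Mᵀ * U = Zᵀ * B' := by
    rw [Matrix.mul_assoc, hMTU, hZT, Matrix.mul_assoc]
  have hstar : A'ᵀ * Z = Zᵀ * B' := by
    calc A'ᵀ * Z = (Zᵀ * A')ᵀ := by rw [Matrix.transpose_mul, Matrix.transpose_transpose]
      _ = (Uᵀ * M * U)ᵀ := by rw [hH]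
      _ = Uᵀ * Mᵀ * U := by
          rw [Matrix.transpose_mul, Matrix.transpose_mul, Matrix.transpose_transpose,
            Matrix.mul_assoc]
      _ = Zᵀ * B' := hHT
  have hstarT : Zᵀ * A' = B'ᵀ * Z := by
    have h2 := congrArg Matrix.transpose hstar
    simpa only [Matrix.transpose_mul, Matrix.transpose_transpose] using h2
  -- choose a good point z₀
  have hq1 : pencilPoly A' B' ≠ 0 := by
    obtain ⟨z, hz⟩ := hreg
    intro h0
    apply hz
    rw [← eval_pencilPoly, h0, eval_zero]
  have hq2 : pencilPoly B' A' ≠ 0 := by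
    intro h0
    apply hq1
    apply Polynomial.eq_zero_of_infinite_isRoot
    apply Set.Infinite.mono (s := {(0 : ℂ)}ᶜ)
    · intro z hz
      have hz' : z ≠ 0 := hz
      have e1 : A' + z • B' = z • (B' + z⁻¹ • A') := by
        rw [smul_add, smul_smul, mul_inv_cancel₀ hz', one_smul, add_comm]
      show (pencilPoly A' B').IsRoot z
      have : (pencilPoly B' A').eval z⁻¹ = 0 := by rw [h0, eval_zero]
      rw [eval_pencilPoly] at this
      rw [Polynomial.IsRoot, eval_pencilPoly, e1, Matrix.det_smul, this, mul_zero]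
    · exact Set.Finite.infinite_compl (Set.finite_singleton 0)
  have hq3 : (X ^ 2 - 1 : ℂ[X]) ≠ 0 := by
    intro h0
    have := congrArg (Polynomial.eval 0) h0
    simp at this
  obtain ⟨z₀, hz₀⟩ : ∃ z₀ : ℂ,
      (pencilPoly A' B' * pencilPoly B' A' * (X ^ 2 - 1)).eval z₀ ≠ 0 := by
    by_contra hcon
    push_neg at hcon
    have : (pencilPoly A' B' * pencilPoly B' A' * (X ^ 2 - 1)) = 0 := by
      apply Polynomial.eq_zero_of_infinite_isRoot
      apply Set.Infinite.mono (s := (Set.univ : Set ℂ)) _ Set.infinite_univ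
      intro z _
      exact hcon z
    rcases mul_eq_zero.mp this with h | h
    · rcases mul_eq_zero.mp h with h' | h'
      · exact hq1 h'
      · exact hq2 h'
    · exact hq3 h
  rw [eval_mul, eval_mul] at hz₀
  have hg : (A' + z₀ • B').det ≠ 0 := by
    rw [← eval_pencilPoly]; intro h; apply hz₀; rw [h]; ring
  have hgh : (B' + z₀ • A').det ≠ 0 := by
    rw [← eval_pencilPoly]; intro h; apply hz₀; rw [h]; ring
  have hz1 : z₀ ^ 2 ≠ 1 := by
    intro h; apply hz₀; simp [h]
  set G : Matrix (Fin ℓ) (Fin ℓ) ℂ := A' + z₀ • B' with hGdef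
  set Gh : Matrix (Fin ℓ) (Fin ℓ) ℂ := B' + z₀ • A' with hGhdef
  have hGu : IsUnit G.det := isUnit_iff_ne_zero.mpr hg
  have hGhu : IsUnit Gh.det := isUnit_iff_ne_zero.mpr hgh
  have hGTu : IsUnit Gᵀ.det := by rwa [Matrix.det_transpose]
  -- pencil intertwining relations
  have hGT : Gᵀ * Z = Zᵀ * Gh := by
    rw [hGdef, hGhdef, Matrix.transpose_add, Matrix.transpose_smul, Matrix.add_mul,
      Matrix.smul_mul, Matrix.mul_add, Matrix.mul_smul, hstar, ← hstarT]
  have hGhT : Ghᵀ * Z = Zᵀ * G := by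
    rw [hGdef, hGhdef, Matrix.transpose_add, Matrix.transpose_smul, Matrix.add_mul,
      Matrix.smul_mul, Matrix.mul_add, Matrix.mul_smul, hstar, ← hstarT, add_comm]
  have key : (Gᵀ)⁻¹ * Zᵀ = Z * Gh⁻¹ := by
    have h1 : Zᵀ = Gᵀ * Z * Gh⁻¹ := by
      rw [hGT, Matrix.mul_assoc, Matrix.mul_nonsing_inv _ hGhu, Matrix.mul_one]
    conv_lhs => rw [h1]
    rw [← Matrix.mul_assoc, ← Matrix.mul_assoc, Matrix.nonsing_inv_mul _ hGTu, Matrix.one_mul]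
  have hED : (Gh * G⁻¹)ᵀ * Z = Z * (Gh⁻¹ * G) := by
    rw [Matrix.transpose_mul, Matrix.transpose_nonsing_inv, Matrix.mul_assoc, hGhT,
      ← Matrix.mul_assoc, key, Matrix.mul_assoc]
  -- disjoint spectra
  have hdisj : ∀ μ : ℂ, (μ • (1 : Matrix (Fin ℓ) (Fin ℓ) ℂ) - (Gh⁻¹ * G)).det = 0 →
      (μ • (1 : Matrix (Fin ℓ) (Fin ℓ) ℂ) - (Gh * G⁻¹)ᵀ).det ≠ 0 := by
    intro μ hD hE
    -- transpose
    have hE' : (μ • (1 : Matrix (Fin ℓ) (Fin ℓ) ℂ) - Gh * G⁻¹).det = 0 := by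
      rw [← Matrix.det_transpose, Matrix.transpose_sub, Matrix.transpose_smul,
        Matrix.transpose_one]
      exact hE
    have hA : (μ • G - Gh).det = 0 := by
      have e : (μ • (1 : Matrix (Fin ℓ) (Fin ℓ) ℂ) - Gh * G⁻¹) * G = μ • G - Gh := by
        rw [Matrix.sub_mul, Matrix.smul_mul, Matrix.one_mul, Matrix.mul_assoc,
          Matrix.nonsing_inv_mul _ hGu, Matrix.mul_one]
      rw [← e, Matrix.det_mul, hE', zero_mul]
    have hB : (μ • Gh - G).det = 0 := by
      have e : Gh * (μ • (1 : Matrix (Fin ℓ) (Fin ℓ) ℂ) - Gh⁻¹ * G) = μ • Gh - G := by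
        rw [Matrix.mul_sub, Matrix.mul_smul, Matrix.mul_one, ← Matrix.mul_assoc,
          Matrix.mul_nonsing_inv _ hGhu, Matrix.one_mul]
      rw [← e, Matrix.det_mul, hD, mul_zero]
    set a : ℂ := μ - z₀ with hadef
    set b : ℂ := μ * z₀ - 1 with hbdef
    have eA : μ • G - Gh = a • A' + b • B' := by
      rw [hGdef, hGhdef, hadef, hbdef]
      module
    have eB : μ • Gh - G = b • A' + a • B' := by
      rw [hGdef, hGhdef, hadef, hbdef]
      module
    have hab : ¬ (a = 0 ∧ b = 0) := by
      rintro ⟨ha, hb⟩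
      apply hz1
      have hμ : μ = z₀ := by rw [hadef] at ha; linear_combination ha
      rw [hbdef, hμ] at hb
      linear_combination hb
    rw [eA] at hA
    rw [eB] at hB
    by_cases ha : a = 0
    · have hb : b ≠ 0 := fun hb => hab ⟨ha, hb⟩
      rw [ha, zero_smul, zero_add, Matrix.det_smul] at hA
      rw [ha, zero_smul, add_zero, Matrix.det_smul] at hB
      have hdB : B'.det = 0 := by
        rcases mul_eq_zero.mp hA with h | h
        · exact absurd h (pow_ne_zero _ hb)
        · exact h
      have hdA : A'.det = 0 := by
        rcases mul_eq_zero.mp hB with h | h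
        · exact absurd h (pow_ne_zero _ hb)
        · exact h
      exact hrf.2 ⟨hdA, hdB⟩
    · by_cases hb : b = 0
      · rw [hb, zero_smul, add_zero, Matrix.det_smul] at hA
        rw [hb, zero_smul, zero_add, Matrix.det_smul] at hB
        have hdA : A'.det = 0 := by
          rcases mul_eq_zero.mp hA with h | h
          · exact absurd h (pow_ne_zero _ ha)
          · exact h
        have hdB : B'.det = 0 := by
          rcases mul_eq_zero.mp hB with h | h
          · exact absurd h (pow_ne_zero _ ha)
          · exact h
        exact hrf.2 ⟨hdA, hdB⟩
      · apply hrf.1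
        refine ⟨b / a, a / b, by field_simp, ?_, ?_⟩
        · have e : a • A' + b • B' = a • (A' + (b / a) • B') := by
            rw [smul_add, smul_smul, mul_div_cancel₀ _ ha]
          rw [e, Matrix.det_smul] at hA
          rcases mul_eq_zero.mp hA with h | h
          · exact absurd h (pow_ne_zero _ ha)
          · exact h
        · have e : b • A' + a • B' = b • (A' + (a / b) • B') := by
            rw [smul_add, smul_smul, mul_div_cancel₀ _ hb]
          rw [e, Matrix.det_smul] at hB
          rcases mul_eq_zero.mp hB with h | h
          · exact absurd h (pow_ne_zero _ hb)
          · exact h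
  have hZ0 : Z = 0 := sylvester _ _ Z hED hdisj
  rw [hH, hZ0, Matrix.transpose_zero, Matrix.zero_mul]
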